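/- Let (Σ, I) be a trace alphabet. For finite words u, v over Σ, the following are equivalent: (1) u ≈ v, i.e., u↾p = v↾p for every D-clique p; (2) v can be obtained from u by a finite sequence of swaps of adjacent independent letters, i.e., u and v are related by the equivalence relation generated by the relation that identifies x·a·b·y with x·b·a·y whenever (a, b) ∈ I. In other words, trace equivalence defined by projections onto D-cliques coincides with the congruence generated by commuting adjacent independent letters. -/

import Mathlib

/- Projection of a finite word onto a set of letters: delete all letters not in `p`. -/
open Classical in
noncomputable def proj {A : Type*} (p : Set A) : List A → List A
  | [] => []
  | a :: u => if a ∈ p then a :: proj p u else proj p u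

/-- `p` is a `D`-clique for the dependence relation `D = (Σ×Σ) \ I`:
all pairs of letters of `p` are dependent, i.e. not independent. -/
def IsDClique {A : Type*} (I : A → A → Prop) (p : Set A) : Prop :=
  ∀ a ∈ p, ∀ b ∈ p, ¬ I a b

/-- Trace equivalence of finite words: equal projections onto every `D`-clique. -/
def TraceEquiv {A : Type*} (I : A → A → Prop) (u v : List A) : Prop :=
  ∀ p : Set A, IsDClique I p → proj p u = proj p v

/-- One swap of two adjacent independent letters. -/
def SwapRel {A : Type*} (I : A → A → Prop) (u v : List A) : Prop :=
  ∃ (x y : List A) (a b : A), I a b ∧ u = x ++ a :: b :: y ∧ v = x ++ b :: a :: y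

lemma proj_append {A : Type*} (p : Set A) (x y : List A) :
    proj p (x ++ y) = proj p x ++ proj p y := by
  induction x with
  | nil => simp [proj]
  | cons a x ih => simp only [List.cons_append, proj]; split <;> simp [ih]

lemma mem_proj {A : Type*} (p : Set A) (u : List A) (a : A) :
    a ∈ proj p u ↔ a ∈ u ∧ a ∈ p := by
  induction u with
  | nil => simp [proj]
  | cons b u ih =>
    simp only [proj]
    split
    · simp only [List.mem_cons, ih]
      constructor
      · rintro (rfl | ⟨h1, h2⟩) <;> tauto
      · rintro ⟨rfl | h1, h2⟩ <;> tauto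
    · simp only [List.mem_cons, ih]
      constructor
      · tauto
      · rintro ⟨rfl | h1, h2⟩
        · tauto
        · tauto

lemma swap_cons {A : Type*} (I : A → A → Prop) (a : A) {u v : List A}
    (h : SwapRel I u v) : SwapRel I (a :: u) (a :: v) := by
  obtain ⟨x, y, b, c, hI, rfl, rfl⟩ := h
  exact ⟨a :: x, y, b, c, hI, rfl, rfl⟩

lemma eqv_cons {A : Type*} (I : A → A → Prop) (a : A) {u v : List A}
    (h : Relation.EqvGen (SwapRel I) u v) :
    Relation.EqvGen (SwapRel I) (a :: u) (a :: v) := by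
  induction h with
  | rel x y h => exact Relation.EqvGen.rel _ _ (swap_cons I a h)
  | refl x => exact Relation.EqvGen.refl _
  | symm x y _ ih => exact ih.symm _ _
  | trans x y z _ _ ih1 ih2 => exact ih1.trans _ _ _ ih2

lemma move_front {A : Type*} (I : A → A → Prop) (a : A) (x y : List A)
    (h : ∀ b ∈ x, I a b) :
    Relation.EqvGen (SwapRel I) (a :: (x ++ y)) (x ++ a :: y) := by
  induction x with
  | nil => exact Relation.EqvGen.refl _
  | cons c x ih =>
    have h1 : Relation.EqvGen (SwapRel I) (a :: c :: (x ++ y)) (c :: a :: (x ++ y)) :=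
      Relation.EqvGen.rel _ _ ⟨[], x ++ y, a, c, h c (by simp), rfl, rfl⟩
    have h2 : Relation.EqvGen (SwapRel I) (c :: (a :: (x ++ y))) (c :: (x ++ a :: y)) :=
      eqv_cons I c (ih (fun b hb => h b (by simp [hb])))
    exact (h1.trans _ _ _ h2)

lemma first_occ {A : Type*} {a : A} {v : List A} (h : a ∈ v) :
    ∃ x y, v = x ++ a :: y ∧ a ∉ x := by
  revert h
  induction v with
  | nil => intro h; simp at h
  | cons b v ih =>
    intro h
    by_cases hb : a = b
    · exact ⟨[], v, by simp [hb], by simp⟩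
    · obtain ⟨x, y, rfl, hx⟩ := ih (by
        rcases List.mem_cons.1 h with h | h
        · exact absurd h hb
        · exact h)
      exact ⟨b :: x, y, rfl, by simp [hx, hb]⟩

/-- trace equivalence (defined by projections onto `D`-cliques) coincides
with the equivalence relation generated by swapping adjacent independent letters. -/
theorem stmt5 {A : Type*} [Fintype A] (I : A → A → Prop)
    (hirr : ∀ a, ¬ I a a) (hsym : ∀ a b, I a b → I b a)
    (u v : List A) :
    TraceEquiv I u v ↔ Relation.EqvGen (SwapRel I) u v := by
  constructor
  · -- hard direction
    induction u generalizing v with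
    | nil =>
      intro h
      cases v with
      | nil => exact Relation.EqvGen.refl _
      | cons b v' =>
        exfalso
        have hcl : IsDClique I {b} := by
          intro x hx y hy
          simp only [Set.mem_singleton_iff] at hx hy; subst hx; subst hy; exact hirr _
        have := h {b} hcl
        simp [proj, Set.mem_singleton_iff] at this
    | cons a u' ih =>
      intro h
      -- a ∈ v
      have hclA : IsDClique I {a} := by
        intro x hx y hy
        simp only [Set.mem_singleton_iff] at hx hy; subst hx; subst hy; exact hirr _
      have hav : a ∈ v := by
        have := h {a} hclA
        simp only [proj, Set.mem_singleton_iff, if_pos rfl] at this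
        have : a ∈ proj {a} v := this ▸ List.mem_cons_self (a := a)
        exact ((mem_proj _ _ _).1 this).1
      obtain ⟨x, y, rfl, hax⟩ := first_occ hav
      -- every letter of x is independent from a
      have hind : ∀ b ∈ x, I a b := by
        intro b hb
        by_contra hIab
        have hne : b ≠ a := fun e => hax (e ▸ hb)
        have hcl : IsDClique I {a, b} := by
          intro c hc d hd
          simp only [Set.mem_insert_iff, Set.mem_singleton_iff] at hc hd
          rcases hc with rfl | rfl <;> rcases hd with rfl | rfl <;>
            first
              | exact hirr _
              | exact hIab
              | exact fun hI => hIab (hsym _ _ hI)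
        have heq := h {a, b} hcl
        rw [proj_append] at heq
        have hpx : b ∈ proj {a, b} x := (mem_proj _ _ _).2 ⟨hb, by simp⟩
        cases hx : proj {a, b} x with
        | nil => rw [hx] at hpx; simp at hpx
        | cons c rest =>
          rw [hx] at heq
          simp only [proj, if_pos (show a ∈ ({a, b} : Set A) by simp)] at heq
          rw [List.cons_append] at heq
          have : a = c := by injection heq
          have hcx : c ∈ x := by
            have : c ∈ proj {a, b} x := by rw [hx]; simp
            exact ((mem_proj _ _ _).1 this).1
          exact hax (this ▸ hcx)
      -- TraceEquiv u' (x ++ y)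
      have htr : TraceEquiv I u' (x ++ y) := by
        intro p hp
        have heq := h p hp
        rw [proj_append] at heq
        by_cases hap : a ∈ p
        · have hpx : proj p x = [] := by
            cases hx : proj p x with
            | nil => rfl
            | cons c rest =>
              exfalso
              have hc : c ∈ proj p x := by rw [hx]; simp
              have hcx := (mem_proj _ _ _).1 hc
              exact hp a hap c hcx.2 (hind c hcx.1)
          rw [hpx] at heq
          simp only [proj, if_pos hap, List.nil_append] at heq
          rw [proj_append, hpx, List.nil_append]
          injection heq
        · simp only [proj, if_neg hap] at heq
          rw [proj_append]
          exact heq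
      have h1 := eqv_cons I a (ih _ htr)
      have h2 := move_front I a x y hind
      exact h1.trans _ _ _ h2
  · -- easy direction
    intro h
    induction h with
    | rel s t hst =>
      obtain ⟨x, y, a, b, hI, rfl, rfl⟩ := hst
      intro p hp
      have : ¬ (a ∈ p ∧ b ∈ p) := fun ⟨ha, hb⟩ => hp a ha b hb hI
      rw [proj_append, proj_append]
      congr 1
      by_cases ha : a ∈ p <;> by_cases hb : b ∈ p
      · exact absurd ⟨ha, hb⟩ this
      all_goals simp [proj, ha, hb]
    | refl s => intro p _; rfl
    | symm s t _ ih => intro p hp; exact (ih p hp).symm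
    | trans s t r _ _ ih1 ih2 => intro p hp; exact (ih1 p hp).trans (ih2 p hp)
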